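/- (Trace symmetry of the monodromy matrix.) Let S(u) be a 2n×2n matrix with entries in 𝒜 ⊗ ℂ(u) satisfying the compact symmetry relation S^t(u) = −(1 + ε/(u−ũ)) S(ũ) + ε S(u)/(u−ũ) − (tr S(u))/(u−ũ−κ) · I, where ũ = κ − u − ρ, and let A(u) denote the top-left n×n block of S(u). Then −tr S(ũ)/(u − ũ + κ) = tr S(u)/(u − ũ − κ) = (tr A(u) − tr A(ũ))/(u − ũ). -/

import Mathlib

open Matrix
open scoped BigOperators

noncomputable section

def theta (n : ℕ) (ε : ℂ) (i : Fin (2 * n)) : ℂ := if (i : ℕ) < n then ε else 1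

def bar {m : ℕ} (i : Fin m) : Fin m := i.rev

def kap (n : ℕ) (ε : ℂ) : ℂ := (n : ℂ) - ε

/-- the transposition `t`, `(e_{ij})^t = θ_{ij} e_{j̄ ī}`, applied to a matrix with
entries in a `ℂ`-algebra -/
def tpA (n : ℕ) (ε : ℂ) {A : Type*} [Ring A] [Algebra ℂ A]
    (M : Matrix (Fin (2*n)) (Fin (2*n)) A) : Matrix (Fin (2*n)) (Fin (2*n)) A :=
  Matrix.of fun i j => (theta n ε i * theta n ε j) • M (bar j) (bar i)

/-- the embedding `Fin n → Fin (2n)` picking out the top-left `n×n` block -/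
def emb (n : ℕ) : Fin n → Fin (2*n) := Fin.castLE (by omega)

lemma theta_sq (n : ℕ) (ε : ℂ) (hε : ε = 1 ∨ ε = -1) (i : Fin (2*n)) :
    theta n ε i * theta n ε i = 1 := by
  unfold theta; rcases hε with h|h <;> subst h <;> split <;> norm_num

lemma sum_split (n : ℕ) {M : Type*} [AddCommMonoid M] (f : Fin (2*n) → M) :
    ∑ i, f i = ∑ i : Fin n, f (emb n i) + ∑ i : Fin n, f (bar (emb n i)) := by
  have hinj : Function.Injective (Sum.elim (emb n) (fun i => bar (emb n i))) := by
    intro x y hxy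
    have h := congrArg Fin.val hxy
    rcases x with x | x <;> rcases y with y | y <;>
      simp only [Sum.elim_inl, Sum.elim_inr, emb, bar, Fin.coe_castLE, Fin.val_rev] at h <;>
      [skip; skip; skip; skip]
    · exact congrArg Sum.inl (Fin.ext h)
    · exfalso; have hx := x.isLt; have hy := y.isLt; omega
    · exfalso; have hx := x.isLt; have hy := y.isLt; omega
    · have hx := x.isLt; have hy := y.isLt
      exact congrArg Sum.inr (Fin.ext (by omega))
  have hbij : Function.Bijective (Sum.elim (emb n) (fun i => bar (emb n i))) := by
    rw [Fintype.bijective_iff_injective_and_card]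
    exact ⟨hinj, by simp [two_mul]⟩
  rw [← Fintype.sum_bijective _ hbij (fun x => f (Sum.elim (emb n) (fun i => bar (emb n i)) x)) f
    (fun _ => rfl)]
  rw [Fintype.sum_sum_type]
  rfl

lemma trace_tpA (n : ℕ) (ε : ℂ) (hε : ε = 1 ∨ ε = -1) {A : Type*} [Ring A] [Algebra ℂ A]
    (M : Matrix (Fin (2*n)) (Fin (2*n)) A) :
    (tpA n ε M).trace = M.trace := by
  simp only [Matrix.trace, Matrix.diag, tpA, Matrix.of_apply, theta_sq n ε hε, one_smul]
  exact Fintype.sum_bijective bar (Function.Involutive.bijective (fun i : Fin (2*n) => Fin.rev_rev i))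
    (fun i => M (bar i) (bar i)) (fun i => M i i) (fun i => rfl)

lemma topsum_tpA (n : ℕ) (ε : ℂ) (hε : ε = 1 ∨ ε = -1) {A : Type*} [Ring A] [Algebra ℂ A]
    (M : Matrix (Fin (2*n)) (Fin (2*n)) A) :
    ∑ i : Fin n, tpA n ε M (emb n i) (emb n i)
      = M.trace - ∑ i : Fin n, M (emb n i) (emb n i) := by
  have h1 : ∑ i : Fin n, tpA n ε M (emb n i) (emb n i)
      = ∑ i : Fin n, M (bar (emb n i)) (bar (emb n i)) := by
    simp only [tpA, Matrix.of_apply, theta_sq n ε hε, one_smul]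
  have h2 := sum_split n (fun i => M i i)
  rw [h1]
  have : M.trace = ∑ i, M i i := by simp [Matrix.trace, Matrix.diag]
  rw [this, h2]; abel

lemma mul_natCast_smul {A : Type*} [Ring A] [Algebra ℂ A] (T : A) (m : ℕ) :
    T * (m : A) = (m : ℂ) • T := by
  rw [show ((m : ℕ) : A) = algebraMap ℂ A (m : ℂ) by simp, ← Algebra.commutes,
    ← Algebra.smul_def]

lemma trace_smul_one {m : ℕ} {A : Type*} [Ring A] [Algebra ℂ A] (T : A) :
    ((T • (1 : Matrix (Fin m) (Fin m) A)).trace) = ((m : ℂ)) • T := by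
  rw [Matrix.trace_smul, Matrix.trace_one, smul_eq_mul, Fintype.card_fin, mul_natCast_smul]

theorem statement10 (n : ℕ) (hn : 1 ≤ n) (ε ρ : ℂ) (hε : ε = 1 ∨ ε = -1)
    {A : Type*} [Ring A] [Algebra ℂ A]
    (S : ℂ → Matrix (Fin (2*n)) (Fin (2*n)) A)
    -- the compact symmetry relation, with ũ = κ - u - ρ
    (hsym : ∀ u ut : ℂ, ut = kap n ε - u - ρ → u - ut ≠ 0 → u - ut - kap n ε ≠ 0 →
      tpA n ε (S u)
        = -((1 + ε / (u - ut)) • S ut) + (ε / (u - ut)) • S u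
          - (1 / (u - ut - kap n ε)) •
              ((S u).trace • (1 : Matrix (Fin (2*n)) (Fin (2*n)) A)))
    (u ut : ℂ) (hut : ut = kap n ε - u - ρ)
    (h1 : u - ut ≠ 0) (h2 : u - ut - kap n ε ≠ 0) (h3 : u - ut + kap n ε ≠ 0) :
    -((1 / (u - ut + kap n ε)) • (S ut).trace) = (1 / (u - ut - kap n ε)) • (S u).trace
    ∧ (1 / (u - ut - kap n ε)) • (S u).trace
        = (1 / (u - ut)) •
            ((∑ i : Fin n, S u (emb n i) (emb n i)) - ∑ i : Fin n, S ut (emb n i) (emb n i)) := by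
  have hε0 : ε ≠ 0 := by rcases hε with h | h <;> simp [h]
  have hut2 : u = kap n ε - ut - ρ := by rw [hut]; ring
  have h1' : ut - u ≠ 0 := fun h => h1 (by linear_combination -h)
  have h2' : ut - u - kap n ε ≠ 0 := fun h => h3 (by linear_combination -h)
  have hm1 := hsym u ut hut h1 h2
  have hm3 := hsym ut u hut2 h1' h2'
  set T : A := (S u).trace with hT
  set Tt : A := (S ut).trace with hTt
  set a : A := ∑ i : Fin n, S u (emb n i) (emb n i) with ha
  set b : A := ∑ i : Fin n, S ut (emb n i) (emb n i) with hb
  -- equation 1: trace of hm1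
  have eq1 : T = -((1 + ε / (u - ut)) • Tt) + (ε / (u - ut)) • T
      - (1 / (u - ut - kap n ε)) • ((2 * (n:ℂ)) • T) := by
    have h := congrArg Matrix.trace hm1
    rw [trace_tpA n ε hε, Matrix.trace_sub, Matrix.trace_add, Matrix.trace_neg,
      Matrix.trace_smul, Matrix.trace_smul, Matrix.trace_smul, trace_smul_one] at h
    rw [← hT, ← hTt] at h
    push_cast at h
    exact h
  -- equation 3: trace of hm3
  have eq3 : Tt = -((1 + ε / (ut - u)) • T) + (ε / (ut - u)) • Tt
      - (1 / (ut - u - kap n ε)) • ((2 * (n:ℂ)) • Tt) := by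
    have h := congrArg Matrix.trace hm3
    rw [trace_tpA n ε hε, Matrix.trace_sub, Matrix.trace_add, Matrix.trace_neg,
      Matrix.trace_smul, Matrix.trace_smul, Matrix.trace_smul, trace_smul_one] at h
    rw [← hT, ← hTt] at h
    push_cast at h
    exact h
  -- equation 2: top-left block sum of hm1
  have eq2 : T - a = -((1 + ε / (u - ut)) • b) + (ε / (u - ut)) • a
      - (1 / (u - ut - kap n ε)) • (((n:ℂ)) • T) := by
    have h := congrArg (fun M : Matrix (Fin (2*n)) (Fin (2*n)) A =>
      ∑ i : Fin n, M (emb n i) (emb n i)) hm1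
    rw [topsum_tpA n ε hε] at h
    rw [← hT, ← ha] at h
    rw [h]
    simp only [Matrix.sub_apply, Matrix.add_apply, Matrix.neg_apply, Matrix.smul_apply,
      Matrix.one_apply_eq, smul_eq_mul, mul_one, Finset.sum_sub_distrib, Finset.sum_add_distrib,
      Finset.sum_neg_distrib, ← Finset.smul_sum, Finset.sum_const, Finset.card_univ,
      Fintype.card_fin, ← Nat.cast_smul_eq_nsmul ℂ]
    rw [← ha, ← hb]
  -- equation 4: top-left block sum of hm3
  have eq4 : Tt - b = -((1 + ε / (ut - u)) • a) + (ε / (ut - u)) • b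
      - (1 / (ut - u - kap n ε)) • (((n:ℂ)) • Tt) := by
    have h := congrArg (fun M : Matrix (Fin (2*n)) (Fin (2*n)) A =>
      ∑ i : Fin n, M (emb n i) (emb n i)) hm3
    rw [topsum_tpA n ε hε] at h
    rw [← hTt, ← hb] at h
    rw [h]
    simp only [Matrix.sub_apply, Matrix.add_apply, Matrix.neg_apply, Matrix.smul_apply,
      Matrix.one_apply_eq, smul_eq_mul, mul_one, Finset.sum_sub_distrib, Finset.sum_add_distrib,
      Finset.sum_neg_distrib, ← Finset.smul_sum, Finset.sum_const, Finset.card_univ,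
      Fintype.card_fin, ← Nat.cast_smul_eq_nsmul ℂ]
    rw [← ha, ← hb]
  -- unfold kap as a scalar
  simp only [kap] at eq1 eq2 eq3 eq4 h1 h2 h3 h1' h2' ⊢
  set d : ℂ := u - ut with hd
  have hdm : ut - u = -d := by rw [hd]; ring
  rw [hdm] at eq3 eq4 h1' h2'
  set k : ℂ := (n:ℂ) - ε with hk
  -- X = 0
  have hX : (d + k) • T + (d - k) • Tt = (0:A) := by
    have key : (d + k) • T + (d - k) • Tt
        = ((d * (d - k)) / (2 * ε)) •
            (T - (-((1 + ε / d) • Tt) + (ε / d) • T - (1 / (d - k)) • ((2 * (n:ℂ)) • T)))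
          - ((d * (d + k)) / (2 * ε)) •
            (Tt - (-((1 + ε / (-d)) • T) + (ε / (-d)) • Tt - (1 / (-d - k)) • ((2 * (n:ℂ)) • Tt))) := by
      match_scalars <;> (rw [hk] at h2 h3 h2' ⊢; field_simp; ring)
    rw [key, sub_eq_zero_of_eq eq1, sub_eq_zero_of_eq eq3, smul_zero, smul_zero, sub_zero]
  have goal1 : -((1 / (d + k)) • Tt) = (1 / (d - k)) • T := by
    have key : -((1 / (d + k)) • Tt) - (1 / (d - k)) • T
        = (-(1 / ((d + k) * (d - k)))) • ((d + k) • T + (d - k) • Tt) := by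
      match_scalars <;> field_simp
    rw [hX, smul_zero] at key
    exact sub_eq_zero.mp key
  refine ⟨goal1, ?_⟩
  -- Y = 0
  have hY : d • T - (d - k) • a + (d - k) • b = (0:A) := by
    have key : d • T - (d - k) • a + (d - k) • b
        = ((d * (d - k)) / (2 * ε)) •
            ((T - a) - (-((1 + ε / d) • b) + (ε / d) • a - (1 / (d - k)) • (((n:ℂ)) • T)))
          + ((d * (d - k)) / (2 * ε)) •
            ((Tt - b) - (-((1 + ε / (-d)) • a) + (ε / (-d)) • b - (1 / (-d - k)) • (((n:ℂ)) • Tt)))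
          - ((d - ε) * d / (2 * ε * (d + k))) • ((d + k) • T + (d - k) • Tt) := by
      match_scalars <;> (rw [hk] at h2 h3 h2' ⊢; field_simp; ring)
    rw [key, sub_eq_zero_of_eq eq2, sub_eq_zero_of_eq eq4, hX]
    simp
  have key2 : (1 / (d - k)) • T - (1 / d) • (a - b)
      = (1 / (d * (d - k))) • (d • T - (d - k) • a + (d - k) • b) := by
    match_scalars <;> (field_simp; try ring)
  rw [hY, smul_zero] at key2
  exact sub_eq_zero.mp key2
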